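/- Fix m ∈ ℕ and let D(0:m,0:m), M(0:m,0:m) be the (m+1)×(m+1) principal finite sections of the pencil (D, M). If λ ∈ ℝ and v ∈ ℝ^{m+1}, v ≠ 0, satisfy D(0:m,0:m)·v = λ·M(0:m,0:m)·v, then 0 < λ < 2[(m+1)(m+2)]². -/

import Mathlib

open Finset Matrix


/-- The diagonal stiffness matrix `D` with `D(n,n) = (n+1)(n+2)`. -/
noncomputable def Dmat (i j : ℕ) : ℝ :=
  if i = j then ((i : ℝ) + 1) * ((i : ℝ) + 2) else 0

/-- The symmetric pentadiagonal mass matrix `M` with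
`M(n,n) = 2(n+1)(n+2)/((2n+1)(2n+5))` and
`M(n,n+2) = M(n+2,n) = -√((n+1)(n+2)(n+3)(n+4)/((2n+3)(2n+5)²(2n+7)))`. -/
noncomputable def Mmat (i j : ℕ) : ℝ :=
  if i = j then 2 * ((i : ℝ) + 1) * ((i : ℝ) + 2) / ((2 * (i : ℝ) + 1) * (2 * (i : ℝ) + 5))
  else if i + 2 = j then
    -Real.sqrt (((i : ℝ) + 1) * ((i : ℝ) + 2) * ((i : ℝ) + 3) * ((i : ℝ) + 4) /
      ((2 * (i : ℝ) + 3) * (2 * (i : ℝ) + 5) ^ 2 * (2 * (i : ℝ) + 7)))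
  else if j + 2 = i then
    -Real.sqrt (((j : ℝ) + 1) * ((j : ℝ) + 2) * ((j : ℝ) + 3) * ((j : ℝ) + 4) /
      ((2 * (j : ℝ) + 3) * (2 * (j : ℝ) + 5) ^ 2 * (2 * (j : ℝ) + 7)))
  else 0

/-- The `(m+1) × (m+1)` principal finite section `D(0:m,0:m)`. -/
noncomputable def Dsec (m : ℕ) : Matrix (Fin (m + 1)) (Fin (m + 1)) ℝ :=
  Matrix.of fun i j => Dmat (i : ℕ) (j : ℕ)

/-- The `(m+1) × (m+1)` principal finite section `M(0:m,0:m)`. -/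
noncomputable def Msec (m : ℕ) : Matrix (Fin (m + 1)) (Fin (m + 1)) ℝ :=
  Matrix.of fun i j => Mmat (i : ℕ) (j : ℕ)


noncomputable def gfun (x : ℝ) : ℝ :=
  (24*(x^2+5*x)+141)/(8*(4*(x^2+5*x)+21)*(4*(x^2+5*x)+25))

lemma g_nonneg {x : ℝ} (hx : 0 ≤ x) : 0 ≤ gfun x := by
  unfold gfun; positivity

lemma g_le {x : ℝ} (hx : 0 ≤ x) : gfun x ≤ 1/4 := by
  unfold gfun
  rw [div_le_iff₀ (by positivity)]
  nlinarith [sq_nonneg x, sq_nonneg (x^2+5*x)]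

lemma e_le {x : ℝ} (hx : 0 ≤ x) :
    Real.sqrt ((x + 1) * (x + 2) * (x + 3) * (x + 4) /
      ((2 * x + 3) * (2 * x + 5) ^ 2 * (2 * x + 7))) ≤ 1/4 - gfun x := by
  have h1 : (x + 1) * (x + 2) * (x + 3) * (x + 4) /
      ((2 * x + 3) * (2 * x + 5) ^ 2 * (2 * x + 7)) = (1/4 - gfun x)^2 - (gfun x)^2 := by
    unfold gfun
    field_simp
    ring
  rw [h1]
  calc Real.sqrt ((1/4 - gfun x)^2 - (gfun x)^2) ≤ Real.sqrt ((1/4 - gfun x)^2) := by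
        apply Real.sqrt_le_sqrt; nlinarith [sq_nonneg (gfun x)]
    _ = 1/4 - gfun x := Real.sqrt_sq (by linarith [g_le hx])

lemma core {x : ℝ} (hx : 0 ≤ x) :
    1/(2*(x+1)*(x+2)) < 2*(x+1)*(x+2)/((2*x+1)*(2*x+5)) - (1/4 - gfun x) - 1/4 := by
  have key : 2*(x+1)*(x+2)/((2*x+1)*(2*x+5)) - (1/4 - gfun x) - 1/4 - 1/(2*(x+1)*(x+2))
      = (7020 + 8158*x + 2050*x^2 + 304*x^3 + 856*x^4 + 448*x^5 + 64*x^6) /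
        (((2*x+1)*(2*x+5)) * (8*(4*(x^2+5*x)+21)*(4*(x^2+5*x)+25)) * (2*(x+1)*(x+2))) := by
    unfold gfun
    field_simp
    ring
  nlinarith [key, div_pos (by positivity : (0:ℝ) < 7020 + 8158*x + 2050*x^2 + 304*x^3 + 856*x^4 + 448*x^5 + 64*x^6) (by positivity : (0:ℝ) < ((2*x+1)*(2*x+5)) * (8*(4*(x^2+5*x)+21)*(4*(x^2+5*x)+25)) * (2*(x+1)*(x+2)))]

noncomputable def dd (n : ℕ) : ℝ :=
  2 * ((n : ℝ) + 1) * ((n : ℝ) + 2) / ((2 * (n : ℝ) + 1) * (2 * (n : ℝ) + 5))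

noncomputable def ee (n : ℕ) : ℝ :=
  Real.sqrt (((n : ℝ) + 1) * ((n : ℝ) + 2) * ((n : ℝ) + 3) * ((n : ℝ) + 4) /
      ((2 * (n : ℝ) + 3) * (2 * (n : ℝ) + 5) ^ 2 * (2 * (n : ℝ) + 7)))

lemma ee_nonneg (n : ℕ) : 0 ≤ ee n := Real.sqrt_nonneg _

lemma ee_le (n : ℕ) : ee n ≤ 1/4 - gfun (n : ℝ) := e_le (Nat.cast_nonneg n)

lemma ee_le_quarter (n : ℕ) : ee n ≤ 1/4 := by
  have := ee_le n
  have := g_nonneg (Nat.cast_nonneg n : (0:ℝ) ≤ (n:ℝ))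
  linarith

lemma Mmat_decomp (n k : ℕ) :
    Mmat n k = (if n = k then dd n else 0) + (if n + 2 = k then -ee n else 0)
      + (if k + 2 = n then -ee k else 0) := by
  unfold Mmat dd ee
  by_cases h1 : n = k
  · subst h1
    simp [show ¬(n + 2 = n) by omega]
  · by_cases h2 : n + 2 = k
    · simp [h1, h2, show ¬(k + 2 = n) by omega]
    · by_cases h3 : k + 2 = n
      · simp [h1, h2, h3]
      · simp [h1, h2, h3]

lemma shift_sum (G : ℕ → ℝ) (N : ℕ) :
    ∑ n ∈ range (N + 2), (if 2 ≤ n then G (n - 2) else 0) = ∑ n ∈ range N, G n := by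
  induction N with
  | zero => simp [Finset.sum_range_succ]
  | succ N ih =>
      rw [Finset.sum_range_succ (fun n => if 2 ≤ n then G (n - 2) else 0) (N + 2), ih,
        Finset.sum_range_succ]
      simp

/-- diagonal double sum -/
lemma diag_sum (N : ℕ) (w : ℕ → ℝ) (f : ℕ → ℝ) :
    ∑ n ∈ range N, ∑ k ∈ range N, w n * ((if n = k then f n else 0) * w k)
      = ∑ n ∈ range N, f n * w n ^ 2 := by
  apply Finset.sum_congr rfl
  intro n hn
  have h1 : ∀ k, w n * ((if n = k then f n else 0) * w k)
      = if n = k then f n * (w n * w k) else 0 := by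
    intro k; split_ifs <;> ring
  simp_rw [h1]
  rw [Finset.sum_ite_eq (range N) n (fun k => f n * (w n * w k)), if_pos hn]
  ring

noncomputable def coef (n : ℕ) : ℝ := dd n - ee n - (if 2 ≤ n then ee (n - 2) else 0)

lemma coef_bound (m n : ℕ) (hn : n ≤ m) :
    1/(2*((m:ℝ)+1)*((m:ℝ)+2)) < coef n := by
  have hx : (0:ℝ) ≤ (n:ℝ) := Nat.cast_nonneg n
  have h1 : ee n ≤ 1/4 - gfun (n:ℝ) := ee_le n
  have h2 : (if 2 ≤ n then ee (n - 2) else 0) ≤ 1/4 := by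
    split_ifs
    · exact ee_le_quarter _
    · norm_num
  have h3 := core hx
  have hnm : (n:ℝ) ≤ (m:ℝ) := Nat.cast_le.mpr hn
  have h4 : 1/(2*((m:ℝ)+1)*((m:ℝ)+2)) ≤ 1/(2*((n:ℝ)+1)*((n:ℝ)+2)) :=
    one_div_le_one_div_of_le (by positivity) (by nlinarith)
  unfold coef dd
  calc 1/(2*((m:ℝ)+1)*((m:ℝ)+2)) ≤ 1/(2*((n:ℝ)+1)*((n:ℝ)+2)) := h4
    _ < 2*((n:ℝ)+1)*((n:ℝ)+2)/((2*(n:ℝ)+1)*(2*(n:ℝ)+5)) - (1/4 - gfun (n:ℝ)) - 1/4 := h3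
    _ ≤ _ := by linarith

set_option maxHeartbeats 2000000 in
theorem generalized_eigenvalue_bounds (m : ℕ) (lam : ℝ) (v : Fin (m + 1) → ℝ)
    (hv : v ≠ 0)
    (heig : (Dsec m).mulVec v = lam • (Msec m).mulVec v) :
    0 < lam ∧ lam < 2 * (((m : ℝ) + 1) * ((m : ℝ) + 2)) ^ 2 := by
  classical
  set N := m + 3 with hN
  set w : ℕ → ℝ := fun n => if h : n < m + 1 then v ⟨n, h⟩ else 0 with hwdef
  have hw : ∀ i : Fin (m + 1), w (i : ℕ) = v i := by
    intro i; rw [hwdef]; exact dif_pos i.isLt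
  have hwz : ∀ n, m + 1 ≤ n → w n = 0 := by
    intro n hn; rw [hwdef]; exact dif_neg (by omega)
  -- generic double-sum representation of quadratic forms
  have hrep : ∀ (A : ℕ → ℕ → ℝ),
      v ⬝ᵥ (Matrix.of fun i j : Fin (m+1) => A (i:ℕ) (j:ℕ)).mulVec v
        = ∑ n ∈ range N, ∑ k ∈ range N, w n * (A n k * w k) := by
    intro A
    have step1 : v ⬝ᵥ (Matrix.of fun i j : Fin (m+1) => A (i:ℕ) (j:ℕ)).mulVec v
        = ∑ n ∈ range (m+1), ∑ k ∈ range (m+1), w n * (A n k * w k) := by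
      rw [dotProduct,
        ← Fin.sum_univ_eq_sum_range (fun n => ∑ k ∈ range (m+1), w n * (A n k * w k))]
      apply Finset.sum_congr rfl
      intro i _
      rw [Matrix.mulVec, dotProduct,
        ← Fin.sum_univ_eq_sum_range (fun k => w (i:ℕ) * (A i k * w k)), Finset.mul_sum]
      apply Finset.sum_congr rfl
      intro j _
      rw [hw i, hw j]
      try simp only [Matrix.of_apply]
      try ring
    rw [step1]
    have hsub : range (m+1) ⊆ range N := by
      apply Finset.range_subset_range.2; omega
    rw [Finset.sum_subset hsub ?_]
    · apply Finset.sum_congr rfl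
      intro n _
      apply Finset.sum_subset hsub
      intro k _ hk
      have : w k = 0 := hwz k (by simpa using hk)
      simp [this]
    · intro n _ hn
      have : w n = 0 := hwz n (by simpa using hn)
      simp [this]
  -- the D quadratic form
  set P := v ⬝ᵥ (Dsec m).mulVec v with hPdef
  have hP : P = ∑ n ∈ range N, ((n:ℝ)+1) * ((n:ℝ)+2) * w n ^ 2 := by
    rw [hPdef, show Dsec m = Matrix.of fun i j : Fin (m+1) => Dmat (i:ℕ) (j:ℕ) from rfl,
      hrep Dmat]
    rw [← diag_sum N w (fun n => ((n:ℝ)+1) * ((n:ℝ)+2))]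
    rfl
  -- the M quadratic form
  set Q := v ⬝ᵥ (Msec m).mulVec v with hQdef
  have hQ : Q = ∑ n ∈ range N, dd n * w n ^ 2
      - 2 * ∑ n ∈ range N, ee n * (w n * w (n + 2)) := by
    rw [hQdef, show Msec m = Matrix.of fun i j : Fin (m+1) => Mmat (i:ℕ) (j:ℕ) from rfl,
      hrep Mmat]
    have expand : ∀ n k, w n * (Mmat n k * w k)
        = w n * ((if n = k then dd n else 0) * w k)
          + w n * ((if n + 2 = k then -ee n else 0) * w k)
          + w n * ((if k + 2 = n then -ee k else 0) * w k) := by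
      intro n k; rw [Mmat_decomp]; ring
    simp_rw [expand, Finset.sum_add_distrib]
    rw [diag_sum N w dd]
    have hupper : ∑ n ∈ range N, ∑ k ∈ range N, w n * ((if n + 2 = k then -ee n else 0) * w k)
        = ∑ n ∈ range N, -(ee n * (w n * w (n + 2))) := by
      apply Finset.sum_congr rfl
      intro n hn
      have h1 : ∀ k, w n * ((if n + 2 = k then -ee n else 0) * w k)
          = if n + 2 = k then -(ee n * (w n * w k)) else 0 := by
        intro k; split_ifs <;> ring
      simp_rw [h1]
      rw [Finset.sum_ite_eq (range N) (n+2) (fun k => -(ee n * (w n * w k)))]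
      by_cases h2 : n + 2 ∈ range N
      · rw [if_pos h2]
      · rw [if_neg h2]
        have : w n = 0 := by
          apply hwz; simp at h2; omega
        simp [this]
    have hlower : ∑ n ∈ range N, ∑ k ∈ range N, w n * ((if k + 2 = n then -ee k else 0) * w k)
        = ∑ n ∈ range N, -(ee n * (w n * w (n + 2))) := by
      rw [Finset.sum_comm]
      apply Finset.sum_congr rfl
      intro k hk
      have h1 : ∀ n, w n * ((if k + 2 = n then -ee k else 0) * w k)
          = if k + 2 = n then -(ee k * (w k * w n)) else 0 := by
        intro n; split_ifs <;> ring
      simp_rw [h1]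
      rw [Finset.sum_ite_eq (range N) (k+2) (fun n => -(ee k * (w k * w n)))]
      by_cases h2 : k + 2 ∈ range N
      · rw [if_pos h2]
      · rw [if_neg h2]
        have : w k = 0 := by
          apply hwz; simp at h2; omega
        simp [this]
    rw [hupper, hlower]
    rw [Finset.sum_neg_distrib]
    ring
  -- assemble
  have hcpos : (0:ℝ) < 1/(2*((m:ℝ)+1)*((m:ℝ)+2)) := by positivity
  set c : ℝ := 1/(2*((m:ℝ)+1)*((m:ℝ)+2)) with hcdef
  set S : ℝ := ∑ n ∈ range N, w n ^ 2 with hSdef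
  -- lower bound for Q by the coefficient sum
  have hQge : ∑ n ∈ range N, coef n * w n ^ 2 ≤ Q := by
    rw [hQ]
    have hsplit : ∑ n ∈ range N, coef n * w n ^ 2
        = ∑ n ∈ range N, (dd n * w n ^ 2 - ee n * w n ^ 2)
          - ∑ n ∈ range N, (if 2 ≤ n then ee (n - 2) * w n ^ 2 else 0) := by
      rw [← Finset.sum_sub_distrib]
      apply Finset.sum_congr rfl
      intro n _
      unfold coef
      split_ifs <;> ring
    have hshift : ∑ n ∈ range N, (if 2 ≤ n then ee (n - 2) * w n ^ 2 else 0)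
        = ∑ n ∈ range (m+1), ee n * w (n+2) ^ 2 := by
      have h : (∑ n ∈ range ((m+1)+2), if 2 ≤ n then ee (n-2) * w ((n-2)+2) ^ 2 else 0)
          = ∑ n ∈ range (m+1), ee n * w (n+2) ^ 2 :=
        shift_sum (fun j => ee j * w (j+2) ^ 2) (m+1)
      rw [← h]
      apply Finset.sum_congr (by rw [hN])
      intro n _
      split_ifs with h2
      · rw [show (n - 2) + 2 = n by omega]
      · rfl
    have hext : ∑ n ∈ range N, ee n * w (n+2) ^ 2 = ∑ n ∈ range (m+1), ee n * w (n+2) ^ 2 := by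
      rw [show N = m+1+1+1 by omega, Finset.sum_range_succ, Finset.sum_range_succ]
      have t1 : ee (m+1) * w (m+1+2) ^ 2 = 0 := by rw [hwz _ (by omega)]; ring
      have t2 : ee (m+1+1) * w (m+1+1+2) ^ 2 = 0 := by rw [hwz _ (by omega)]; ring
      rw [t1, t2]
      ring
    rw [hsplit, hshift, ← hext]
    have hrhs : ∑ n ∈ range N, dd n * w n ^ 2 - 2 * ∑ n ∈ range N, ee n * (w n * w (n + 2))
        = ∑ n ∈ range N, (dd n * w n ^ 2 - 2 * (ee n * (w n * w (n + 2)))) := by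
      rw [Finset.sum_sub_distrib, Finset.mul_sum]
    rw [hrhs, ← Finset.sum_sub_distrib]
    apply Finset.sum_le_sum
    intro n _
    nlinarith [ee_nonneg n, sq_nonneg (w n - w (n+2)), sq_nonneg (w n + w (n+2))]
  -- witness
  obtain ⟨i, hi⟩ : ∃ i, v i ≠ 0 := Function.ne_iff.mp hv
  have hwk : w (i:ℕ) ≠ 0 := by rw [hw i]; exact hi
  have hkm : (i:ℕ) ≤ m := by have := i.isLt; omega
  have hkN : (i:ℕ) ∈ range N := by
    rw [Finset.mem_range]; have := i.isLt; omega
  have hwk2 : 0 < w (i:ℕ) ^ 2 := by positivity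
  have hSpos : 0 < S := by
    rw [hSdef]
    apply Finset.sum_pos' (fun n _ => sq_nonneg (w n)) ⟨(i:ℕ), hkN, hwk2⟩
  have hLpos : c * S < ∑ n ∈ range N, coef n * w n ^ 2 := by
    rw [hSdef, Finset.mul_sum, ← sub_pos, ← Finset.sum_sub_distrib]
    apply Finset.sum_pos'
    · intro n hn
      by_cases h : n ≤ m
      · have := coef_bound m n h
        nlinarith [sq_nonneg (w n)]
      · have hz : w n = 0 := hwz n (by omega)
        simp [hz]
    · refine ⟨(i:ℕ), hkN, ?_⟩
      have := coef_bound m (i:ℕ) hkm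
      nlinarith
  have hQc : c * S < Q := lt_of_lt_of_le hLpos hQge
  have hQpos : 0 < Q := lt_trans (mul_pos hcpos hSpos) hQc
  have hPpos : 0 < P := by
    rw [hP]
    apply Finset.sum_pos'
    · intro n _
      positivity
    · refine ⟨(i:ℕ), hkN, ?_⟩
      have h1 : (0:ℝ) < ((i:ℕ):ℝ) + 1 := by positivity
      have h2 : (0:ℝ) < ((i:ℕ):ℝ) + 2 := by positivity
      exact mul_pos (mul_pos h1 h2) hwk2
  have hPle : P ≤ ((m:ℝ)+1)*((m:ℝ)+2) * S := by
    rw [hP, hSdef, Finset.mul_sum]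
    apply Finset.sum_le_sum
    intro n _
    by_cases h : n ≤ m
    · have hc1 : ((n:ℝ)) ≤ (m:ℝ) := Nat.cast_le.mpr h
      apply mul_le_mul_of_nonneg_right _ (sq_nonneg (w n))
      nlinarith
    · have hz : w n = 0 := hwz n (by omega)
      simp [hz]
  have hPQ : P = lam * Q := by
    show v ⬝ᵥ (Dsec m).mulVec v = lam * (v ⬝ᵥ (Msec m).mulVec v)
    rw [heig, dotProduct_smul, smul_eq_mul]
  have hlampos : 0 < lam := by
    rcases lt_trichotomy lam 0 with h | h | h
    · nlinarith
    · rw [h] at hPQ; nlinarith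
    · exact h
  refine ⟨hlampos, ?_⟩
  have h5 : (lam * c) * S < P := by
    rw [hPQ]
    calc (lam * c) * S = lam * (c * S) := by ring
      _ < lam * Q := by exact mul_lt_mul_of_pos_left hQc hlampos
  have h6 : lam * c < ((m:ℝ)+1)*((m:ℝ)+2) := by
    have := lt_of_lt_of_le h5 hPle
    exact lt_of_mul_lt_mul_right this hSpos.le
  have hc1 : c * (2*((m:ℝ)+1)*((m:ℝ)+2)) = 1 := by
    rw [hcdef]; field_simp
  nlinarith [mul_lt_mul_of_pos_right h6 (show (0:ℝ) < 2*((m:ℝ)+1)*((m:ℝ)+2) by positivity)]
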